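/- Let X be an N×N complex Hermitian positive semidefinite matrix and let v ∈ ℂ^N be a unit vector (‖v‖ = 1). Set α := v* X v (a nonnegative real number). Then ‖X − α · v v*‖_F² ≤ 2 · Tr(X) · ( Tr(X) − α ). -/

import Mathlib

open Matrix ComplexOrder

private lemma two_by_two (Y : Matrix (Fin 2) (Fin 2) ℂ) (hY : Y.PosSemidef) :
    Complex.normSq (Y 0 1) ≤ (Y 0 0).re * (Y 1 1).re := by
  have h10 : Y 1 0 = starRingEnd ℂ (Y 0 1) := by
    have := congrFun (congrFun hY.1 1) 0
    simpa [conjTranspose_apply] using this.symm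
  have h00 : (Y 0 0).im = 0 := by
    have := congrFun (congrFun hY.1 0) 0
    rw [conjTranspose_apply] at this
    exact Complex.conj_eq_iff_im.mp this
  have h11 : (Y 1 1).im = 0 := by
    have := congrFun (congrFun hY.1 1) 1
    rw [conjTranspose_apply] at this
    exact Complex.conj_eq_iff_im.mp this
  have hA : 0 ≤ (Y 0 0).re := by
    have h := hY.dotProduct_mulVec_nonneg ![1, 0]
    have h' := (Complex.le_def.mp h).1
    simpa [dotProduct, mulVec, Fin.sum_univ_two] using h'
  have hC : 0 ≤ (Y 1 1).re := by
    have h := hY.dotProduct_mulVec_nonneg ![0, 1]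
    have h' := (Complex.le_def.mp h).1
    simpa [dotProduct, mulVec, Fin.sum_univ_two] using h'
  have key : ∀ r : ℝ, 0 ≤ (Y 1 1).re * (r * r) + (2 * Complex.normSq (Y 0 1)) * r
      + (Y 0 0).re * Complex.normSq (Y 0 1) := by
    intro r
    have h := hY.dotProduct_mulVec_nonneg ![Y 0 1, (r : ℂ)]
    have h' := (Complex.le_def.mp h).1
    simp only [dotProduct, mulVec, Fin.sum_univ_two, Matrix.cons_val_zero,
      Matrix.cons_val_one, Matrix.head_cons, Pi.star_apply, RCLike.star_def, h10,
      Complex.add_re, Complex.mul_re, Complex.conj_re, Complex.conj_im, Complex.zero_re,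
      Complex.add_im, Complex.mul_im, Complex.ofReal_re, Complex.ofReal_im,
      h00, h11] at h'
    simp only [Complex.normSq_apply]
    nlinarith [h']
  have hd := discrim_le_zero key
  rw [discrim] at hd
  rcases eq_or_lt_of_le (Complex.normSq_nonneg (Y 0 1)) with h0 | h0
  · nlinarith [hA, hC]
  · nlinarith [hd, h0]

private lemma entry_bound (N : ℕ) (X : Matrix (Fin N) (Fin N) ℂ) (hX : X.PosSemidef)
    (s t : Fin N) : Complex.normSq (X s t) ≤ (X s s).re * (X t t).re := by
  have := two_by_two (X.submatrix ![s, t] ![s, t]) (hX.submatrix _)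
  simpa [submatrix_apply] using this

theorem stmt_11 (N : ℕ) (X : Matrix (Fin N) (Fin N) ℂ) (hX : X.PosSemidef)
    (v : Fin N → ℂ) (hv : ∑ i, Complex.normSq (v i) = 1) :
    ∑ s, ∑ t, Complex.normSq
        ((X - (((star v ⬝ᵥ (X *ᵥ v)).re : ℝ) : ℂ) • vecMulVec v (star v)) s t) ≤
      2 * X.trace.re * (X.trace.re - (star v ⬝ᵥ (X *ᵥ v)).re) := by
  set α : ℝ := (star v ⬝ᵥ (X *ᵥ v)).re with hα
  have hsum2 : ∑ s, ∑ t, (X s t * (starRingEnd ℂ (v s) * v t)).re = α := by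
    have h1 : ∀ s : Fin N, ∑ t, (X s t * (starRingEnd ℂ (v s) * v t)).re
        = (starRingEnd ℂ (v s) * (X *ᵥ v) s).re := by
      intro s
      rw [← Complex.re_sum]
      congr 1
      rw [mulVec, dotProduct, Finset.mul_sum]
      exact Finset.sum_congr rfl fun t _ => by ring
    rw [Finset.sum_congr rfl fun s _ => h1 s, ← Complex.re_sum, hα]
    congr 1
  have expand : ∑ s, ∑ t, Complex.normSq
        ((X - ((α : ℝ) : ℂ) • vecMulVec v (star v)) s t)
      = (∑ s, ∑ t, Complex.normSq (X s t)) - α ^ 2 := by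
    have hpt : ∀ s t : Fin N, Complex.normSq
          ((X - ((α : ℝ) : ℂ) • vecMulVec v (star v)) s t)
        = Complex.normSq (X s t)
          + (α * α) * (Complex.normSq (v s) * Complex.normSq (v t))
          - 2 * (α * (X s t * (starRingEnd ℂ (v s) * v t)).re) := by
      intro s t
      have he : (X - ((α : ℝ) : ℂ) • vecMulVec v (star v)) s t
          = X s t - (α : ℂ) * (v s * starRingEnd ℂ (v t)) := by
        simp [vecMulVec_apply]
      rw [he, Complex.normSq_sub]
      have hc : starRingEnd ℂ ((α : ℂ) * (v s * starRingEnd ℂ (v t)))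
          = (α : ℂ) * (starRingEnd ℂ (v s) * v t) := by
        simp [_root_.map_mul, Complex.conj_ofReal, mul_comm]
      rw [hc]
      have hre : (X s t * ((α : ℂ) * (starRingEnd ℂ (v s) * v t))).re
          = α * (X s t * (starRingEnd ℂ (v s) * v t)).re := by
        rw [mul_left_comm, Complex.re_ofReal_mul]
      rw [hre]
      have hns : Complex.normSq ((α : ℂ) * (v s * starRingEnd ℂ (v t)))
          = (α * α) * (Complex.normSq (v s) * Complex.normSq (v t)) := by
        simp [_root_.map_mul, Complex.normSq_ofReal, Complex.normSq_conj]
      rw [hns]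
    rw [Finset.sum_congr rfl fun s _ => Finset.sum_congr rfl fun t _ => hpt s t]
    simp only [Finset.sum_add_distrib, Finset.sum_sub_distrib, ← Finset.mul_sum,
      ← Finset.sum_mul, hv]
    rw [hsum2]
    ring
  rw [expand]
  have hT : X.trace.re = ∑ s, (X s s).re := by
    simp [trace, diag, Complex.re_sum]
  have hS1 : ∑ s, ∑ t, Complex.normSq (X s t) ≤ X.trace.re * X.trace.re := by
    rw [hT, Finset.sum_mul_sum]
    exact Finset.sum_le_sum fun s _ => Finset.sum_le_sum fun t _ => entry_bound N X hX s t
  nlinarith [hS1, sq_nonneg (X.trace.re - α)]
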